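/- For a 4D Gaussian with mean μ = (μ_{1:3}, μ_t) and covariance Σ' = VΣVᵀ (V the Galilean shearing matrix with velocity v, Σ_tt > 0), the conditional mean of the spatial coordinates given time t equals μ_{1:3} + (Σ_xt Σ_tt⁻¹ + v)(t − μ_t). -/

import Mathlib

open Matrix

/-- The Galilean shearing matrix `V = [[I₃, v],[0,1]]` as a 4×4 block matrix,
indexed by `Fin 3 ⊕ Unit`. -/
noncomputable def galV (v : Fin 3 → ℝ) : Matrix (Fin 3 ⊕ Unit) (Fin 3 ⊕ Unit) ℝ :=
  Matrix.fromBlocks 1 (Matrix.replicateCol Unit v) 0 1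

/-- For a 4D Gaussian with mean `μ = (μ₁:₃, μₜ)` and sheared covariance
`Σ' = V Σ Vᵀ` (with `Σtt > 0`), the conditional mean of the spatial coordinates
given time `t`, namely `μ₁:₃ + Σ'_xt (Σ'_tt)⁻¹ (t − μₜ)`, equals
`μ₁:₃ + (Σ_xt Σ_tt⁻¹ + v)(t − μₜ)`. -/
theorem galV_conditional_mean (v : Fin 3 → ℝ)
    (S : Matrix (Fin 3 ⊕ Unit) (Fin 3 ⊕ Unit) ℝ) (hS : S.IsSymm)
    (htt : 0 < S (Sum.inr ()) (Sum.inr ())) (μ : (Fin 3 ⊕ Unit) → ℝ) (t : ℝ) :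
    (fun i : Fin 3 =>
        μ (Sum.inl i) +
          ((galV v * S * (galV v)ᵀ).toBlocks₁₂ i () *
              ((galV v * S * (galV v)ᵀ) (Sum.inr ()) (Sum.inr ()))⁻¹) *
            (t - μ (Sum.inr ()))) =
    (fun i : Fin 3 =>
        μ (Sum.inl i) +
          (S.toBlocks₁₂ i () * (S (Sum.inr ()) (Sum.inr ()))⁻¹ + v i) *
            (t - μ (Sum.inr ()))) := by
  have hne : S (Sum.inr ()) (Sum.inr ()) ≠ 0 := ne_of_gt htt
  funext i
  have h1 : (galV v * S * (galV v)ᵀ).toBlocks₁₂ i ()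
      = S (Sum.inl i) (Sum.inr ()) + v i * S (Sum.inr ()) (Sum.inr ()) := by
    simp [galV, Matrix.toBlocks₁₂, Matrix.mul_apply, Fintype.sum_sum_type,
      Matrix.fromBlocks, Matrix.one_apply, Finset.sum_ite_eq, Finset.mul_sum]
  have h2 : (galV v * S * (galV v)ᵀ) (Sum.inr ()) (Sum.inr ())
      = S (Sum.inr ()) (Sum.inr ()) := by
    simp [galV, Matrix.mul_apply, Fintype.sum_sum_type, Matrix.fromBlocks,
      Matrix.one_apply]
  rw [h1, h2, Matrix.toBlocks₁₂]
  simp only [Matrix.of_apply]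
  field_simp
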